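/- Let K be a field of characteristic zero and α₂, α₁, α₀, β ∈ K. Let L be the D2 operator with parameters (α₂, α₁, α₀, β) and let L̃ be its formal derivative with respect to D, namely L̃ = 2D + α₂t(2D + 1) + 2α₁t²(D+1) + α₀t³(2D + 3). Suppose φ₀ ∈ K[[t]] has constant coefficient 1 and L(φ₀) = 0, and ψ ∈ K[[t]] has constant coefficient 0 and L(ψ) + L̃(φ₀) = 0 (so that (log t)·φ₀ + ψ is formally annihilated by L). Then (1 + α₂t + α₁t² + α₀t³)·(φ₀² + (Dψ)·φ₀ − ψ·(Dφ₀)) = 1 in K[[t]]. -/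

import Mathlib

open PowerSeries

/-- The Euler operator `D = t·d/dt` on formal power series: `D(tⁿ) = n·tⁿ`. -/
noncomputable def eulerD {K : Type*} [Semiring K] (f : PowerSeries K) : PowerSeries K :=
  PowerSeries.mk fun n => (n : K) * PowerSeries.coeff n f

/-- The operator `D + c`. -/
noncomputable def eulerDplus {K : Type*} [Semiring K] (c : K) (f : PowerSeries K) :
    PowerSeries K :=
  eulerD f + C c * f

/-- The D2 operator `D² + t(α₂D² + α₂D − β) + α₁t²(D+1)² + α₀t³(D+1)(D+2)`. -/
noncomputable def D2op {K : Type*} [Field K] (α₂ α₁ α₀ β : K) (φ : PowerSeries K) :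
    PowerSeries K :=
  eulerD (eulerD φ)
    + X * (C α₂ * eulerD (eulerD φ) + C α₂ * eulerD φ - C β * φ)
    + C α₁ * X ^ 2 * eulerDplus 1 (eulerDplus 1 φ)
    + C α₀ * X ^ 3 * eulerDplus 1 (eulerDplus 2 φ)

/-- The formal derivative of the D2 operator with respect to `D`:
`L̃ = 2D + α₂t(2D + 1) + 2α₁t²(D+1) + α₀t³(2D + 3)`. -/
noncomputable def D2til {K : Type*} [Field K] (α₂ α₁ α₀ : K) (φ : PowerSeries K) :
    PowerSeries K :=
  2 * eulerD φ
    + C α₂ * X * (2 * eulerD φ + φ)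
    + 2 * (C α₁ * X ^ 2 * eulerDplus 1 φ)
    + C α₀ * X ^ 3 * (2 * eulerD φ + 3 * φ)

section aux
variable {K : Type*} [Field K]

lemma eulerD_eq (f : PowerSeries K) : eulerD f = X * f.derivativeFun := by
  ext n
  cases n with
  | zero => simp [eulerD]
  | succ m =>
    rw [PowerSeries.coeff_succ_X_mul, show f.derivativeFun = d⁄dX K f from rfl, coeff_derivativeFun]
    simp [eulerD]
    ring

lemma eulerD_mul (f g : PowerSeries K) :
    eulerD (f * g) = eulerD f * g + f * eulerD g := by
  simp only [eulerD_eq, derivativeFun_mul, smul_eq_mul]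
  ring

lemma eulerD_add (f g : PowerSeries K) : eulerD (f + g) = eulerD f + eulerD g := by
  ext n; simp [eulerD, mul_add]

lemma eulerD_sub (f g : PowerSeries K) : eulerD (f - g) = eulerD f - eulerD g := by
  ext n; simp [eulerD, mul_sub]

lemma eulerD_C_mul (c : K) (f : PowerSeries K) : eulerD (C c * f) = C c * eulerD f := by
  ext n; simp [eulerD, coeff_C_mul]; ring

lemma eulerD_X : eulerD (X : PowerSeries K) = X := by
  ext n; simp [eulerD, coeff_X]
  rcases eq_or_ne n 1 with h | h <;> simp [h]

lemma eulerD_one : eulerD (1 : PowerSeries K) = 0 := by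
  ext n; simp [eulerD, coeff_one]
  rcases eq_or_ne n 0 with h | h <;> simp [h]

lemma eulerD_X_pow (n : ℕ) : eulerD ((X : PowerSeries K) ^ n) = (n : PowerSeries K) * X ^ n := by
  induction n with
  | zero => simpa using eulerD_one
  | succ m ih =>
    rw [pow_succ, eulerD_mul, ih, eulerD_X]
    push_cast
    ring

lemma constantCoeff_eulerD (f : PowerSeries K) : constantCoeff (eulerD f) = 0 := by
  rw [← coeff_zero_eq_constantCoeff]; simp [eulerD]

lemma D2op_eq (α₂ α₁ α₀ β : K) (φ : PowerSeries K) :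
    D2op α₂ α₁ α₀ β φ =
      (1 + C α₂ * X + C α₁ * X ^ 2 + C α₀ * X ^ 3) * eulerD (eulerD φ)
        + (C α₂ * X + 2 * (C α₁ * X ^ 2) + 3 * (C α₀ * X ^ 3)) * eulerD φ
        + (-(C β * X) + C α₁ * X ^ 2 + 2 * (C α₀ * X ^ 3)) * φ := by
  simp only [D2op, eulerDplus, eulerD_add, eulerD_C_mul]
  simp only [map_one, map_ofNat]
  ring

lemma D2til_eq (α₂ α₁ α₀ : K) (φ : PowerSeries K) :
    D2til α₂ α₁ α₀ φ =
      2 * ((1 + C α₂ * X + C α₁ * X ^ 2 + C α₀ * X ^ 3) * eulerD φ)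
        + (C α₂ * X + 2 * (C α₁ * X ^ 2) + 3 * (C α₀ * X ^ 3)) * φ := by
  simp only [D2til, eulerDplus, map_one]
  ring

end aux

theorem stmt_16 {K : Type*} [Field K] [CharZero K] (α₂ α₁ α₀ β : K)
    (φ₀ ψ : PowerSeries K)
    (hφ₀ : PowerSeries.constantCoeff φ₀ = 1)
    (hψ : PowerSeries.constantCoeff ψ = 0)
    (hL : D2op α₂ α₁ α₀ β φ₀ = 0)
    (hLψ : D2op α₂ α₁ α₀ β ψ + D2til α₂ α₁ α₀ φ₀ = 0) :
    (1 + C α₂ * X + C α₁ * X ^ 2 + C α₀ * X ^ 3)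
      * (φ₀ ^ 2 + eulerD ψ * φ₀ - ψ * eulerD φ₀) = 1 := by
  set P : PowerSeries K := 1 + C α₂ * X + C α₁ * X ^ 2 + C α₀ * X ^ 3 with hP
  set Q : PowerSeries K := C α₂ * X + 2 * (C α₁ * X ^ 2) + 3 * (C α₀ * X ^ 3) with hQ
  set R : PowerSeries K := -(C β * X) + C α₁ * X ^ 2 + 2 * (C α₀ * X ^ 3) with hR
  set w : PowerSeries K := φ₀ ^ 2 + eulerD ψ * φ₀ - ψ * eulerD φ₀ with hw
  have hL' : P * eulerD (eulerD φ₀) + Q * eulerD φ₀ + R * φ₀ = 0 := by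
    rw [← D2op_eq]; exact hL
  have hLψ' : (P * eulerD (eulerD ψ) + Q * eulerD ψ + R * ψ)
      + (2 * (P * eulerD φ₀) + Q * φ₀) = 0 := by
    rw [← D2op_eq, ← D2til_eq]; exact hLψ
  have hDP : eulerD P = Q := by
    rw [hP, hQ, eulerD_add, eulerD_add, eulerD_add, eulerD_one,
      eulerD_C_mul, eulerD_C_mul, eulerD_C_mul, eulerD_X, eulerD_X_pow, eulerD_X_pow]
    push_cast
    ring
  have key : eulerD (P * w) = 0 := by
    rw [eulerD_mul, hDP, hw, pow_two, eulerD_sub, eulerD_add, eulerD_mul, eulerD_mul,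
      eulerD_mul]
    rw [hw, pow_two] at *
    linear_combination φ₀ * hLψ' - ψ * hL'
  have hconst : constantCoeff (P * w) = 1 := by
    rw [map_mul]
    have h1 : constantCoeff P = 1 := by
      rw [hP]; simp
    have h2 : constantCoeff w = 1 := by
      rw [hw]; simp [constantCoeff_eulerD, hφ₀, hψ]
    rw [h1, h2, mul_one]
  ext n
  cases n with
  | zero =>
    rw [coeff_zero_eq_constantCoeff, hconst]
    simp
  | succ m =>
    have h0 : coeff (m + 1) (eulerD (P * w)) = 0 := by rw [key]; simp
    rw [eulerD, coeff_mk] at h0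
    have : ((m + 1 : ℕ) : K) ≠ 0 := Nat.cast_ne_zero.mpr (Nat.succ_ne_zero m)
    have hc := (mul_eq_zero.mp h0).resolve_left this
    rw [hc]
    simp [coeff_one]
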